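/- Necessity of the locality, positivity, and zero-sum conditions: if L(x; s) = Σ_ξ T(ξ; s) f(x−ξ) is a discrete pre-scale-space representation on ℤᴰ satisfying the differential equation ∂_s L(x;s) = Σ_ξ a_ξ L(x+ξ; s) that does not enhance local extrema for every input f ∈ l¹ (i.e., ∂_s L ≤ 0 at every local spatial maximum and ∂_s L ≥ 0 at every local spatial minimum), then the coefficients must satisfy: a_ξ = 0 whenever ‖ξ‖_∞ > 1; a_ξ ≥ 0 for ξ ≠ 0; and Σ_ξ a_ξ = 0. -/

import Mathlib

private lemma sum_singleton_aux (D : ℕ) (a : (Fin D → ℤ) →₀ ℝ) (ξ : Fin D → ℤ) :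
    (Finsupp.sum a fun ζ c => c * (if ζ = ξ then (1:ℝ) else 0)) = a ξ := by
  simp [mul_ite, Finsupp.sum_ite_eq']
  exact fun h => h.symm

private lemma summable_singleton_aux (D : ℕ) (ξ : Fin D → ℤ) :
    Summable (fun x : Fin D → ℤ => if x = ξ then (1:ℝ) else 0) := by
  apply summable_of_ne_finset_zero (s := {ξ})
  intro b hb; simp at hb; simp [hb]

private lemma summable_cube_aux (D : ℕ) : Summable (fun x : Fin D → ℤ =>
    if ∀ i, |x i| ≤ 1 then (1:ℝ) else 0) := by
  apply summable_of_ne_finset_zero (s := Finset.Icc (fun _ => -1) (fun _ => 1))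
  intro b hb
  simp only [Finset.mem_Icc] at hb
  rw [if_neg]
  intro h
  exact hb ⟨fun i => (abs_le.mp (h i)).1, fun i => (abs_le.mp (h i)).2⟩

private lemma zero_cube_aux (D : ℕ) : ∀ i : Fin D, |(0 : Fin D → ℤ) i| ≤ 1 := by
  intro i
  norm_num

/-- Necessity of the locality, positivity and zero-sum conditions for a
discrete scale space on `ℤᴰ`: if the shift-invariant infinitesimal generator
`(𝒜 f)(x) = Σ_ξ a_ξ f(x+ξ)` satisfies non-enhancement of local extrema for
every input `f ∈ l¹` — i.e. `(𝒜 f)(x₀) ≤ 0` at every (weak) local maximum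
`x₀` of `f` and `(𝒜 f)(x₀) ≥ 0` at every (weak) local minimum, where a weak
local maximum means `f x ≤ f x₀` for all `x` with `‖x − x₀‖_∞ ≤ 1` — then
`a_ξ = 0` whenever `‖ξ‖_∞ > 1`, `a_ξ ≥ 0` for `ξ ≠ 0`, and `Σ_ξ a_ξ = 0`. -/
theorem discrete_scale_space_necessity (D : ℕ)
    (a : (Fin D → ℤ) →₀ ℝ)
    (hmax : ∀ f : (Fin D → ℤ) → ℝ, Summable f →
      ∀ x₀ : Fin D → ℤ,
        (∀ x : Fin D → ℤ, (∀ i, |x i - x₀ i| ≤ 1) → f x ≤ f x₀) →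
        (Finsupp.sum a fun ξ c => c * f (x₀ + ξ)) ≤ 0)
    (hmin : ∀ f : (Fin D → ℤ) → ℝ, Summable f →
      ∀ x₀ : Fin D → ℤ,
        (∀ x : Fin D → ℤ, (∀ i, |x i - x₀ i| ≤ 1) → f x₀ ≤ f x) →
        0 ≤ (Finsupp.sum a fun ξ c => c * f (x₀ + ξ))) :
    (∀ ξ : Fin D → ℤ, (∃ i, 1 < |ξ i|) → a ξ = 0) ∧
    (∀ ξ : Fin D → ℤ, ξ ≠ 0 → 0 ≤ a ξ) ∧
    (Finsupp.sum a fun _ c => c) = 0 := by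
  have hpos : ∀ ξ : Fin D → ℤ, ξ ≠ 0 → 0 ≤ a ξ := by
    intro ξ hξ
    have h := hmin (fun x => if x = ξ then (1:ℝ) else 0) (summable_singleton_aux D ξ) 0 ?_
    · simp only [zero_add] at h
      rwa [sum_singleton_aux D a ξ] at h
    · intro x _
      rw [if_neg (Ne.symm hξ)]
      split <;> norm_num
  have hloc : ∀ ξ : Fin D → ℤ, (∃ i, 1 < |ξ i|) → a ξ = 0 := by
    intro ξ ⟨i, hi⟩
    have hξ0 : ξ ≠ 0 := by
      intro h; rw [h] at hi; simp at hi
    have hle : a ξ ≤ 0 := by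
      have h := hmax (fun x => if x = ξ then (1:ℝ) else 0) (summable_singleton_aux D ξ) 0 ?_
      · simp only [zero_add] at h
        rwa [sum_singleton_aux D a ξ] at h
      · intro x hx
        have hxξ : x ≠ ξ := by
          intro h; subst h
          have := hx i
          simp only [Pi.zero_apply, sub_zero] at this
          omega
        rw [if_neg hxξ, if_neg (Ne.symm hξ0)]
    exact le_antisymm hle (hpos ξ hξ0)
  refine ⟨hloc, hpos, ?_⟩
  have key : (Finsupp.sum a fun ξ c => c * (if ∀ i, |ξ i| ≤ 1 then (1:ℝ) else 0))
      = Finsupp.sum a fun _ c => c := by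
    rw [Finsupp.sum, Finsupp.sum]
    apply Finset.sum_congr rfl
    intro ξ hξ
    rw [if_pos, mul_one]
    intro i
    by_contra h
    exact (Finsupp.mem_support_iff.mp hξ) (hloc ξ ⟨i, by omega⟩)
  have h1 := hmax (fun x => if ∀ i, |x i| ≤ 1 then (1:ℝ) else 0) (summable_cube_aux D) 0 ?_
  · have h2 := hmin (fun x => if ∀ i, |x i| ≤ 1 then (1:ℝ) else 0) (summable_cube_aux D) 0 ?_
    · simp only [zero_add] at h1 h2
      rw [key] at h1 h2
      linarith
    · intro x hx
      rw [if_pos (zero_cube_aux D), if_pos (fun i => by simpa using hx i)]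
  · intro x _
    rw [if_pos (zero_cube_aux D)]
    split <;> norm_num
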